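/- For all n ≥ 1 and all p ∈ (0,1), if X_1, X_2, ... are i.i.d. Bernoulli(p) random variables and S_n = X_1 + ... + X_n, then the probability that there exists some n ∈ ℕ with (n+1) · C(n, S_n) · p^{S_n} (1-p)^{n-S_n} ≤ ε is at most ε, for any ε ∈ (0,1). -/

import Mathlib

open MeasureTheory ProbabilityTheory Finset

/-- The binomial probability mass function `b(n,p,x) = C(n,x) p^x (1-p)^(n-x)`. -/
noncomputable def binomPMF (n : ℕ) (p : ℝ) (x : ℕ) : ℝ :=
  (n.choose x : ℝ) * p ^ x * (1 - p) ^ (n - x)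

open Finset

noncomputable def wgt (n k : ℕ) : ℝ :=
  (k.factorial * (n - k).factorial : ℝ) / (n + 1).factorial

lemma wgt_pos (n k : ℕ) : 0 < wgt n k := by
  apply div_pos <;> positivity

lemma wgt_zero : wgt 0 0 = 1 := by simp [wgt]

lemma wgt_succ {n k : ℕ} (hk : k ≤ n) :
    wgt (n + 1) k + wgt (n + 1) (k + 1) = wgt n k := by
  have h1 : n + 1 - k = (n - k) + 1 := by omega
  have h2 : n + 1 - (k + 1) = n - k := by omega
  rw [wgt, wgt, wgt, h1, h2, Nat.factorial_succ (n - k), Nat.factorial_succ k,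
    Nat.factorial_succ (n + 1)]
  have hf : (0:ℝ) < (n + 1).factorial := by positivity
  have hcast : ((n:ℝ) - k) = ((n - k : ℕ) : ℝ) := by
    rw [Nat.cast_sub hk]
  push_cast
  field_simp
  rw [← hcast]
  ring

lemma wgt_mul {n k : ℕ} (hk : k ≤ n) :
    wgt n k * (((n : ℝ) + 1) * (n.choose k : ℝ)) = 1 := by
  have h := Nat.choose_mul_factorial_mul_factorial hk
  have h2 : (n + 1).factorial = (n + 1) * n.factorial := Nat.factorial_succ n
  have hf : (0:ℝ) < (n + 1).factorial := by positivity
  rw [wgt]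
  rw [div_mul_eq_mul_div, div_eq_one_iff_eq (ne_of_gt hf)]
  push_cast [h2, ← h]
  ring

/-- number of `true`s among first `m` coordinates -/
def cnt {n : ℕ} (v : Fin n → Bool) (m : ℕ) : ℕ :=
  ∑ i : Fin n, if i.val < m ∧ v i then 1 else 0

lemma cnt_eq_card {n : ℕ} (v : Fin n → Bool) :
    cnt v n = (Finset.univ.filter (fun i => v i = true)).card := by
  rw [cnt, Finset.card_filter]
  apply Finset.sum_congr rfl
  intro i _
  simp [i.isLt]

lemma cnt_le {n : ℕ} (v : Fin n → Bool) : cnt v n ≤ n := by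
  rw [cnt_eq_card]
  simpa using Finset.card_filter_le Finset.univ (fun i : Fin n => v i = true)

lemma cnt_snoc_of_le {n : ℕ} (v : Fin n → Bool) (b : Bool) {m : ℕ} (hm : m ≤ n) :
    cnt (Fin.snoc v b) m = cnt v m := by
  have hlast : ¬ ((Fin.last n).val < m ∧ (Fin.snoc v b : Fin (n+1) → Bool) (Fin.last n) = true) := by
    rintro ⟨h, -⟩
    simp only [Fin.val_last] at h
    omega
  rw [cnt, cnt, Fin.sum_univ_castSucc, if_neg hlast, add_zero]
  apply Finset.sum_congr rfl
  intro i _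
  simp [Fin.snoc_castSucc]

lemma cnt_snoc_last {n : ℕ} (v : Fin n → Bool) (b : Bool) :
    cnt (Fin.snoc v b) (n + 1) = cnt v n + b.toNat := by
  rw [cnt, cnt, Fin.sum_univ_castSucc]
  congr 1
  · apply Finset.sum_congr rfl
    intro i _
    have h1 : (i.castSucc).val < n + 1 := by omega
    have h2 : i.val < n := i.isLt
    have h3 : (i : ℕ) < n + 1 := by omega
    simp [Fin.snoc_castSucc, h1, h2, h3]
  · simp only [Fin.val_last, Fin.snoc_last]
    cases b <;> simp

open Classical in
/-- sum of weights of strings of length `n` that first hit the condition at time `n` -/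
noncomputable def gsum (c : ℕ → ℕ → Prop) (n : ℕ) : ℝ :=
  ∑ v : Fin n → Bool,
    if (c n (cnt v n) ∧ ∀ m, 1 ≤ m → m < n → ¬ c m (cnt v m)) then wgt n (cnt v n) else 0

open Classical in
/-- sum of weights of strings of length `n` that never hit the condition up to time `n` -/
noncomputable def rsum (c : ℕ → ℕ → Prop) (n : ℕ) : ℝ :=
  ∑ v : Fin n → Bool,
    if (∀ m, 1 ≤ m → m ≤ n → ¬ c m (cnt v m)) then wgt n (cnt v n) else 0

lemma gsum_nonneg (c : ℕ → ℕ → Prop) (n : ℕ) : 0 ≤ gsum c n := by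
  classical
  apply Finset.sum_nonneg
  intro v _
  split
  · exact (wgt_pos _ _).le
  · exact le_refl 0

lemma rsum_nonneg (c : ℕ → ℕ → Prop) (n : ℕ) : 0 ≤ rsum c n := by
  classical
  apply Finset.sum_nonneg
  intro v _
  split
  · exact (wgt_pos _ _).le
  · exact le_refl 0

lemma rsum_zero (c : ℕ → ℕ → Prop) : rsum c 0 = 1 := by
  classical
  rw [rsum]
  rw [Fintype.sum_eq_single (fun i : Fin 0 => false)]
  · have : ∀ m, 1 ≤ m → m ≤ 0 → ¬ c m (cnt (fun _ : Fin 0 => false) m) := by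
      intro m h1 h2; omega
    rw [if_pos this]
    have : cnt (fun _ : Fin 0 => false) 0 = 0 := by simp [cnt]
    rw [this, wgt_zero]
  · intro v hv
    exact absurd (funext fun i => i.elim0) hv

lemma gsum_zero {c : ℕ → ℕ → Prop} (h0 : ¬ c 0 0) : gsum c 0 = 0 := by
  classical
  rw [gsum]
  apply Finset.sum_eq_zero
  intro v _
  rw [if_neg]
  rintro ⟨h, -⟩
  have : cnt v 0 = 0 := by simp [cnt]
  rw [this] at h
  exact h0 h

lemma step (c : ℕ → ℕ → Prop) (n : ℕ) :
    gsum c (n + 1) + rsum c (n + 1) = rsum c n := by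
  classical
  rw [gsum, rsum, ← Finset.sum_add_distrib]
  have main : ∀ F : (Fin (n+1) → Bool) → ℝ,
      ∑ x : Fin (n+1) → Bool, F x = ∑ v : Fin n → Bool, ∑ b : Bool, F (Fin.snoc v b) := by
    intro F
    rw [← Equiv.sum_comp (Fin.snocEquiv (fun _ => Bool)) F, Fintype.sum_prod_type]
    rw [Finset.sum_comm]
    rfl
  rw [main]
  rw [rsum]
  apply Finset.sum_congr rfl
  intro v _
  refine Eq.trans (Finset.sum_congr (g := fun b : Bool =>
      if (∀ m, 1 ≤ m → m ≤ n → ¬ c m (cnt v m)) then wgt (n+1) (cnt v n + b.toNat) else 0)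
      rfl (fun b _ => ?_)) ?_
  · beta_reduce
    have hle : ∀ m, m ≤ n → cnt (Fin.snoc v b : Fin (n+1) → Bool) m = cnt v m :=
      fun m hm => cnt_snoc_of_le v b hm
    have hlast := cnt_snoc_last v b
    by_cases hrun : ∀ m, 1 ≤ m → m ≤ n → ¬ c m (cnt v m)
    · rw [if_pos hrun]
      by_cases hhit : c (n+1) (cnt (Fin.snoc v b) (n+1))
      · rw [if_pos, if_neg, add_zero, hlast]
        · intro h
          exact (h (n+1) (by omega) (le_refl _)) hhit
        · refine ⟨hhit, fun m h1 h2 => ?_⟩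
          rw [hle m (by omega)]
          exact hrun m h1 (by omega)
      · rw [if_neg, if_pos, zero_add, hlast]
        · intro m h1 h2
          rcases Nat.lt_or_ge m (n+1) with h | h
          · rw [hle m (by omega)]; exact hrun m h1 (by omega)
          · have : m = n + 1 := by omega
            subst this; exact hhit
        · rintro ⟨h, -⟩; exact hhit h
    · rw [if_neg hrun]
      push_neg at hrun
      obtain ⟨m, h1, h2, h3⟩ := hrun
      rw [if_neg, if_neg, add_zero]
      · intro h
        exact h m h1 (by omega) (by rw [hle m h2]; exact h3)
      · rintro ⟨-, h⟩
        exact h m h1 (by omega) (by rw [hle m h2]; exact h3)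
  · by_cases hrun : ∀ m, 1 ≤ m → m ≤ n → ¬ c m (cnt v m)
    · simp only [if_pos hrun]
      rw [Fintype.sum_bool]
      simp only [Bool.toNat_true, Bool.toNat_false, add_zero]
      rw [add_comm]
      exact wgt_succ (cnt_le v)
    · simp only [if_neg hrun]
      simp

lemma kraft_aux {c : ℕ → ℕ → Prop} (h0 : ¬ c 0 0) (N : ℕ) :
    ∑ n ∈ Finset.range (N + 1), gsum c n + rsum c N = 1 := by
  induction N with
  | zero => simp [gsum_zero h0, rsum_zero]
  | succ N ih =>
      rw [Finset.sum_range_succ, add_assoc, step c N, ih]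

lemma kraft {c : ℕ → ℕ → Prop} (h0 : ¬ c 0 0) (N : ℕ) :
    ∑ n ∈ Finset.range N, gsum c n ≤ 1 := by
  calc ∑ n ∈ Finset.range N, gsum c n
      ≤ ∑ n ∈ Finset.range (N + 1), gsum c n := by
        apply Finset.sum_le_sum_of_subset_of_nonneg
        · exact Finset.range_subset_range.2 (by omega)
        · intro i _ _; exact gsum_nonneg c i
    _ ≤ 1 := by
        have := kraft_aux h0 N
        have := rsum_nonneg c N
        linarith

lemma binom_le_wgt {n k : ℕ} {p ε : ℝ} (hk : k ≤ n)
    (h1 : ((n : ℝ) + 1) * binomPMF n p k ≤ ε) :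
    p ^ k * (1 - p) ^ (n - k) ≤ ε * wgt n k := by
  calc p ^ k * (1 - p) ^ (n - k)
      = (wgt n k * (((n : ℝ) + 1) * (n.choose k : ℝ))) * (p ^ k * (1 - p) ^ (n - k)) := by
        rw [wgt_mul hk, one_mul]
    _ = wgt n k * (((n : ℝ) + 1) * binomPMF n p k) := by
        rw [binomPMF]; ring
    _ ≤ wgt n k * ε := mul_le_mul_of_nonneg_left h1 (wgt_pos n k).le
    _ = ε * wgt n k := by ring

/-- Robbins (1970) confidence sequence inequality: for i.i.d. Bernoulli(p) variables
`X i` with partial sums `S n`, the probability that `(n+1) b(n,p,S_n) ≤ ε` for some `n ≥ 1`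
is at most `ε`. -/
theorem stmt0
    (Ω : Type*) [MeasureSpace Ω] [IsProbabilityMeasure (ℙ : Measure Ω)]
    (p ε : ℝ) (hp : p ∈ Set.Ioo (0:ℝ) 1) (hε : ε ∈ Set.Ioo (0:ℝ) 1)
    (X : ℕ → Ω → ℕ)
    (hmeas : ∀ i, Measurable (X i))
    (hindep : iIndepFun X ℙ)
    (hval : ∀ i ω, X i ω ≤ 1)
    (hdist : ∀ i, ℙ {ω | X i ω = 1} = ENNReal.ofReal p) :
    ℙ {ω | ∃ n : ℕ, 1 ≤ n ∧
        ((n : ℝ) + 1) * binomPMF n p (∑ i ∈ Finset.range n, X i ω) ≤ ε}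
      ≤ ENNReal.ofReal ε := by
  classical
  obtain ⟨hp0, hp1⟩ := hp
  obtain ⟨hε0, hε1⟩ := hε
  set c : ℕ → ℕ → Prop := fun n k => ((n : ℝ) + 1) * binomPMF n p k ≤ ε with hcdef
  have hc00 : ¬ c 0 0 := by
    intro h
    simp only [hcdef, binomPMF] at h
    norm_num at h
    linarith
  set S : ℕ → Ω → ℕ := fun n ω => ∑ i ∈ Finset.range n, X i ω with hSdef
  set Cyl : ∀ n : ℕ, (Fin n → Bool) → Set Ω :=
    fun n v => {ω | ∀ i : Fin n, X i ω = (v i).toNat} with hCyl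
  set fst : ∀ n : ℕ, (Fin n → Bool) → Prop :=
    fun n v => c n (cnt v n) ∧ ∀ m, 1 ≤ m → m < n → ¬ c m (cnt v m) with hfst
  set A : ℕ → Set Ω := fun n => ⋃ v ∈ Finset.univ.filter (fst n), Cyl n v with hA
  -- the event is contained in the union of the A n
  have hsub : {ω | ∃ n : ℕ, 1 ≤ n ∧
      ((n : ℝ) + 1) * binomPMF n p (∑ i ∈ Finset.range n, X i ω) ≤ ε} ⊆ ⋃ n, A n := by
    intro ω hω
    obtain ⟨n0, hn01, hn02⟩ := hω
    have hex : ∃ n, 1 ≤ n ∧ c n (S n ω) := ⟨n0, hn01, hn02⟩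
    set N := Nat.find hex with hN
    obtain ⟨hN1, hN2⟩ := Nat.find_spec hex
    set v : Fin N → Bool := fun i => decide (X i ω = 1) with hv
    have hXv : ∀ i : Fin N, X (i : ℕ) ω = (v i).toNat := by
      intro i
      have h1 := hval i ω
      by_cases h : X (i : ℕ) ω = 1
      · simp [hv, h]
      · have h0 : X (i : ℕ) ω = 0 := by omega
        simp [hv, h0]
    have hScnt : ∀ m, m ≤ N → S m ω = cnt v m := by
      intro m hm
      have e1 : cnt v m = ∑ i : Fin N, if (i : ℕ) < m then X (i : ℕ) ω else 0 := by
        rw [cnt]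
        apply Finset.sum_congr rfl
        intro i _
        by_cases hi : (i : ℕ) < m
        · simp only [hi, true_and, if_true]
          rw [hXv i]
          cases hvi : v i <;> simp [hvi]
        · simp [hi]
      have e2 : (∑ i : Fin N, if (i : ℕ) < m then X (i : ℕ) ω else 0)
          = ∑ i ∈ Finset.range N, (if i < m then X i ω else 0) :=
        Fin.sum_univ_eq_sum_range (fun i => if i < m then X i ω else 0) N
      have e3 : (∑ i ∈ Finset.range N, (if i < m then X i ω else 0))
          = ∑ i ∈ (Finset.range N).filter (· < m), X i ω := (Finset.sum_filter _ _).symm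
      have e4 : (Finset.range N).filter (· < m) = Finset.range m := by
        ext i
        simp only [Finset.mem_filter, Finset.mem_range]
        omega
      rw [hSdef, e1, e2, e3, e4]
    refine Set.mem_iUnion.2 ⟨N, ?_⟩
    rw [hA]
    have hvmem : v ∈ Finset.univ.filter (fst N) := by
      rw [Finset.mem_filter]
      refine ⟨Finset.mem_univ _, ?_, ?_⟩
      · rw [← hScnt N le_rfl]; exact hN2
      · intro m h1m hmN hcm
        rw [hN] at hmN
        exact (Nat.find_min hex hmN) ⟨h1m, by rw [hScnt m hmN.le]; exact hcm⟩
    have hωmem : ω ∈ Cyl N v := fun i => hXv i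
    exact Set.mem_biUnion hvmem hωmem
  -- probability of each cylinder
  have hone : ∀ i, ℙ {ω | X i ω = 1} = ENNReal.ofReal p := hdist
  have hzero : ∀ i, ℙ {ω | X i ω = 0} = ENNReal.ofReal (1 - p) := by
    intro i
    have hms : MeasurableSet {ω | X i ω = 1} := hmeas i (measurableSet_singleton 1)
    have hcpl : {ω | X i ω = 0} = {ω | X i ω = 1}ᶜ := by
      ext ω
      have := hval i ω
      simp only [Set.mem_setOf_eq, Set.mem_compl_iff]
      omega
    rw [hcpl, measure_compl hms (measure_ne_top _ _), hdist i, measure_univ,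
      ← ENNReal.ofReal_one, ← ENNReal.ofReal_sub 1 hp0.le]
  have hCylMeas : ∀ n (v : Fin n → Bool), MeasurableSet (Cyl n v) := by
    intro n v
    have : Cyl n v = ⋂ i : Fin n, (X (i : ℕ)) ⁻¹' {(v i).toNat} := by
      ext ω
      simp [hCyl, Set.mem_iInter]
    rw [this]
    exact MeasurableSet.iInter fun i => (hmeas i) (measurableSet_singleton _)
  have hCylProb : ∀ n (v : Fin n → Bool),
      ℙ (Cyl n v) = ENNReal.ofReal (p ^ (cnt v n) * (1 - p) ^ (n - cnt v n)) := by
    intro n v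
    set sets : ℕ → Set ℕ := fun i => if h : i < n then {(v ⟨i, h⟩).toNat} else Set.univ
      with hsets
    have hCeq : Cyl n v = ⋂ i ∈ Finset.range n, X i ⁻¹' sets i := by
      ext ω
      simp only [hCyl, Set.mem_setOf_eq, Set.mem_iInter, Finset.mem_range]
      constructor
      · intro h i hi
        simp only [hsets, dif_pos hi, Set.mem_preimage, Set.mem_singleton_iff]
        exact h ⟨i, hi⟩
      · intro h i
        have := h (i : ℕ) i.isLt
        simp only [hsets, dif_pos i.isLt, Set.mem_preimage, Set.mem_singleton_iff,
          Fin.eta] at this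
        exact this
    have hsetsMeas : ∀ i, i ∈ Finset.range n → MeasurableSet (sets i) := by
      intro i _
      rw [hsets]
      beta_reduce
      split
      · exact measurableSet_singleton _
      · exact MeasurableSet.univ
    rw [hCeq, hindep.measure_inter_preimage_eq_mul (Finset.range n) hsetsMeas]
    have e1 : (∏ i ∈ Finset.range n, ℙ (X i ⁻¹' sets i))
        = ∏ i : Fin n, ℙ (X (i : ℕ) ⁻¹' sets (i : ℕ)) :=
      (Fin.prod_univ_eq_prod_range (fun i => ℙ (X i ⁻¹' sets i)) n).symm
    rw [e1]
    have e2 : ∀ i : Fin n, ℙ (X (i : ℕ) ⁻¹' sets (i : ℕ))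
        = ENNReal.ofReal (if v i then p else 1 - p) := by
      intro i
      have hsi : sets (i : ℕ) = {(v i).toNat} := by
        rw [hsets]
        simp [i.isLt]
      rw [hsi]
      have hpre : X (i : ℕ) ⁻¹' {(v i).toNat} = {ω | X (i : ℕ) ω = (v i).toNat} := rfl
      rw [hpre]
      cases hvi : v i
      · simpa using hzero (i : ℕ)
      · simpa using hone (i : ℕ)
    rw [Fintype.prod_congr _ _ e2, ← ENNReal.ofReal_prod_of_nonneg]
    · congr 1
      rw [Finset.prod_ite (fun _ => p) (fun _ => 1 - p)]
      rw [Finset.prod_const, Finset.prod_const]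
      rw [← cnt_eq_card]
      congr 2
      have := Finset.card_filter_add_card_filter_not
        (s := (Finset.univ : Finset (Fin n))) (p := fun i => v i = true)
      rw [cnt_eq_card]
      simp only [Finset.card_univ, Fintype.card_fin] at this ⊢
      omega
    · intro i _
      split
      · exact hp0.le
      · linarith
  -- bound the probability of each A n
  have hAbound : ∀ n, ℙ (A n) ≤ ENNReal.ofReal (ε * gsum c n) := by
    intro n
    rw [hA]
    have hdisj : Set.PairwiseDisjoint
        (↑(Finset.univ.filter (fst n)) : Set (Fin n → Bool)) (Cyl n) := by
      intro u _ w _ huw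
      apply Set.disjoint_left.2
      intro ω hu hw
      apply huw
      funext i
      have h1 : X (i : ℕ) ω = (u i).toNat := hu i
      have h2 : X (i : ℕ) ω = (w i).toNat := hw i
      have : (u i).toNat = (w i).toNat := by omega
      cases hui : u i <;> cases hwi : w i <;> simp_all
    rw [measure_biUnion_finset hdisj (fun v _ => hCylMeas n v)]
    have hterm : ∀ v ∈ Finset.univ.filter (fst n),
        ℙ (Cyl n v) ≤ ENNReal.ofReal (ε * wgt n (cnt v n)) := by
      intro v hvf
      rw [Finset.mem_filter] at hvf
      obtain ⟨-, hc1, -⟩ := hvf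
      rw [hCylProb n v]
      exact ENNReal.ofReal_le_ofReal (binom_le_wgt (cnt_le v) hc1)
    calc (∑ v ∈ Finset.univ.filter (fst n), ℙ (Cyl n v))
        ≤ ∑ v ∈ Finset.univ.filter (fst n), ENNReal.ofReal (ε * wgt n (cnt v n)) :=
          Finset.sum_le_sum hterm
      _ = ENNReal.ofReal (∑ v ∈ Finset.univ.filter (fst n), ε * wgt n (cnt v n)) :=
          (ENNReal.ofReal_sum_of_nonneg (fun v _ => by
            have := wgt_pos n (cnt v n); positivity)).symm
      _ = ENNReal.ofReal (ε * gsum c n) := by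
          congr 1
          rw [← Finset.mul_sum]
          congr 1
          rw [gsum, Finset.sum_filter]
          refine Finset.sum_congr rfl fun v _ => ?_
          rcases Classical.em (c n (cnt v n) ∧ ∀ m, 1 ≤ m → m < n → ¬c m (cnt v m)) with h | h
          · rw [if_pos h, if_pos h]
          · rw [if_neg h, if_neg h]
  -- assemble
  calc ℙ {ω | ∃ n : ℕ, 1 ≤ n ∧
        ((n : ℝ) + 1) * binomPMF n p (∑ i ∈ Finset.range n, X i ω) ≤ ε}
      ≤ ℙ (⋃ n, A n) := measure_mono hsub
    _ ≤ ∑' n, ℙ (A n) := measure_iUnion_le A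
    _ ≤ ∑' n, ENNReal.ofReal (ε * gsum c n) := ENNReal.tsum_le_tsum hAbound
    _ ≤ ENNReal.ofReal ε := by
        rw [ENNReal.tsum_eq_iSup_sum]
        apply iSup_le
        intro s
        obtain ⟨N, hN⟩ := Finset.exists_nat_subset_range s
        calc (∑ n ∈ s, ENNReal.ofReal (ε * gsum c n))
            = ENNReal.ofReal (∑ n ∈ s, ε * gsum c n) :=
              (ENNReal.ofReal_sum_of_nonneg (fun n _ => by
                have := gsum_nonneg c n; positivity)).symm
          _ ≤ ENNReal.ofReal ε := by
              apply ENNReal.ofReal_le_ofReal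
              rw [← Finset.mul_sum]
              have hle1 : (∑ n ∈ s, gsum c n) ≤ 1 := by
                calc (∑ n ∈ s, gsum c n)
                    ≤ ∑ n ∈ Finset.range N, gsum c n :=
                      Finset.sum_le_sum_of_subset_of_nonneg hN
                        (fun i _ _ => gsum_nonneg c i)
                  _ ≤ 1 := kraft hc00 N
              nlinarith [Finset.sum_nonneg (fun n (_ : n ∈ s) => gsum_nonneg c n)]
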